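/- arXiv:2003.12788 — 3 statements merged into one kernel-verified Lean document; each statement's English description precedes it below -/
import Mathlib

section
/- Let T be a triangulated category and let (f,g,h) be a morphism of distinguished triangles from X →^x Y →^y Z → X[1] to A →^a B →^b C → A[1] (so a∘f = g∘x and b∘g = h∘y and the shifted square commutes). Then f factors through x if and only if h factors through b. -/
open CategoryTheory CategoryTheory.Limits CategoryTheory.Pretriangulated

universe v u

/-- For a morphism (f,g,h) of distinguished triangles
`X → Y → Z → X[1]` to `A → B → C → A[1]`, `f` factors through `x`
iff `h` factors through `b`. -/
theorem stmt1 {T : Type u} [Category.{v} T] [Preadditive T] [HasZeroObject T]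
    [HasShift T ℤ] [∀ n : ℤ, (shiftFunctor T n).Additive] [Pretriangulated T]
    {X Y Z A B C : T}
    (x : X ⟶ Y) (y : Y ⟶ Z) (z : Z ⟶ X⟦(1 : ℤ)⟧)
    (a : A ⟶ B) (b : B ⟶ C) (c : C ⟶ A⟦(1 : ℤ)⟧)
    (hT₁ : Triangle.mk x y z ∈ distTriang T)
    (hT₂ : Triangle.mk a b c ∈ distTriang T)
    (f : X ⟶ A) (g : Y ⟶ B) (h : Z ⟶ C)
    (comm₁ : x ≫ g = f ≫ a) (comm₂ : y ≫ h = g ≫ b)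
    (comm₃ : z ≫ f⟦(1 : ℤ)⟧' = h ≫ c) :
    (∃ s : Y ⟶ A, f = x ≫ s) ↔ (∃ t : Z ⟶ B, h = t ≫ b) := by
  have z₃₁ := comp_distTriang_mor_zero₃₁ _ hT₁
  have z₂₃ := comp_distTriang_mor_zero₂₃ _ hT₂
  change z ≫ x⟦(1 : ℤ)⟧' = 0 at z₃₁
  change b ≫ c = 0 at z₂₃
  have key : (∃ s : Y ⟶ A, f = x ≫ s) ↔ z ≫ f⟦(1 : ℤ)⟧' = 0 := by
    constructor
    · rintro ⟨s, rfl⟩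
      rw [Functor.map_comp, ← Category.assoc, z₃₁, zero_comp]
    · intro hz
      have hz2 : (shiftFunctor T (-1)).map z ≫
          (shiftFunctor T (-1)).map (f⟦(1 : ℤ)⟧') = 0 := by
        rw [← Functor.map_comp, hz, Functor.map_zero]
      have hz' : (Triangle.mk x y z).invRotate.mor₁ ≫ f = 0 := by
        change (-(z⟦(-1 : ℤ)⟧') ≫ (shiftFunctorCompIsoId T 1 (-1) (by omega)).hom.app X) ≫ f = 0
        have nat := (shiftFunctorCompIsoId T 1 (-1) (by omega)).hom.naturality f
        dsimp at nat
        rw [Preadditive.neg_comp, Category.assoc, ← nat,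
          reassoc_of% hz2, zero_comp, neg_zero]
      obtain ⟨s, hs⟩ := Triangle.yoneda_exact₂ _ (inv_rot_of_distTriang _ hT₁) f hz'
      exact ⟨s, hs⟩
  have key₂ : (∃ t : Z ⟶ B, h = t ≫ b) ↔ h ≫ c = 0 := by
    constructor
    · rintro ⟨t, rfl⟩
      rw [Category.assoc, z₂₃, comp_zero]
    · intro hc
      exact Triangle.coyoneda_exact₃ _ hT₂ h hc
  rw [key, key₂, comm₃]
end

section
/- Let A be an abelian category and M an object with Ext¹(M,M) = 0. Suppose 0 → Y → M₀ → X → 0 is a short exact sequence with M₀ ∈ add M, that there is an epimorphism M₁ ↠ Y with M₁ ∈ add M, that Ext¹(X, M) = 0, and that Ext²(X, Y') = 0 where Y' is the kernel of M₁ ↠ Y. Then Ext¹(X, Y) = 0, the sequence 0 → Y → M₀ → X → 0 splits, and X is a direct summand of M₀. -/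
open CategoryTheory CategoryTheory.Limits

universe w v u

/-- `N` belongs to `add M`: it is a direct summand of a finite direct sum of
copies of `M`. -/
def InAdd {A : Type u} [Category.{v} A] [Abelian A] (M N : A) : Prop :=
  haveI : HasFiniteBiproducts A := HasFiniteBiproducts.of_hasFiniteProducts
  ∃ (n : ℕ) (i : N ⟶ ⨁ (fun _ : Fin n => M)) (r : (⨁ (fun _ : Fin n => M)) ⟶ N),
    i ≫ r = 𝟙 N

namespace StmtAux

open CategoryTheory.Abelian

variable {A : Type u} [Category.{v} A] [Abelian A] [HasExt.{w} A]

lemma mk₀_add {X Y : A} (f g : X ⟶ Y) :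
    Ext.mk₀ (f + g) = Ext.mk₀ f + Ext.mk₀ g := by
  letI := HasDerivedCategory.standard A
  apply Ext.ext
  rw [Ext.add_hom, Ext.mk₀_hom, Ext.mk₀_hom, Ext.mk₀_hom, Functor.map_add]
  simp [ShiftedHom.mk₀, Preadditive.add_comp]

/-- `mk₀` as an additive map. -/
noncomputable def mk₀AddHom (X Y : A) : (X ⟶ Y) →+ Ext X Y 0 :=
  AddMonoidHom.mk' Ext.mk₀ (mk₀_add)

/-- composition with a fixed element on the left, as an additive map. -/
noncomputable def compAddHom {X Y : A} {n : ℕ} (α : Ext X Y n) (Z : A) :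
    Ext Y Z 0 →+ Ext X Z n :=
  AddMonoidHom.mk' (fun β => α.comp β (add_zero n))
    (fun β₁ β₂ => Ext.comp_add α β₁ β₂ (add_zero n))

lemma subsingleton_of_inAdd (M X N : A) (n : ℕ)
    (h : Subsingleton (Ext X M n)) (hN : InAdd M N) :
    Subsingleton (Ext X N n) := by
  haveI : HasFiniteBiproducts A := HasFiniteBiproducts.of_hasFiniteProducts
  obtain ⟨k, i, r, hir⟩ := hN
  have hB : ∀ (β : Ext X (⨁ (fun _ : Fin k => M)) n), β = 0 := by
    intro β
    have h1 : β = β.comp (Ext.mk₀ (𝟙 _)) (add_zero n) := (Ext.comp_mk₀_id β).symm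
    rw [h1, ← biproduct.total]
    rw [show Ext.mk₀ (∑ j : Fin k, biproduct.π (fun _ : Fin k => M) j ≫
        biproduct.ι (fun _ : Fin k => M) j) =
        ∑ j : Fin k, Ext.mk₀ (biproduct.π (fun _ : Fin k => M) j ≫
          biproduct.ι (fun _ : Fin k => M) j) from map_sum (mk₀AddHom _ _) _ _]
    rw [show β.comp (∑ j : Fin k, Ext.mk₀ (biproduct.π (fun _ : Fin k => M) j ≫
        biproduct.ι (fun _ : Fin k => M) j)) (add_zero n) =
        ∑ j : Fin k, β.comp (Ext.mk₀ (biproduct.π (fun _ : Fin k => M) j ≫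
          biproduct.ι (fun _ : Fin k => M) j)) (add_zero n) from
      map_sum (compAddHom β _) _ _]
    apply Finset.sum_eq_zero
    intro j _
    rw [← Ext.mk₀_comp_mk₀, ← Ext.comp_assoc_of_second_deg_zero]
    have : β.comp (Ext.mk₀ (biproduct.π (fun _ : Fin k => M) j)) (add_zero n) = 0 :=
      Subsingleton.elim _ _
    rw [this, Ext.zero_comp]
  constructor
  intro α β
  have key : ∀ γ : Ext X N n, γ = 0 := by
    intro γ
    have : γ = (γ.comp (Ext.mk₀ i) (add_zero n)).comp (Ext.mk₀ r) (add_zero n) := by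
      rw [Ext.comp_assoc_of_third_deg_zero, Ext.mk₀_comp_mk₀, hir, Ext.comp_mk₀_id]
    rw [this, hB (γ.comp (Ext.mk₀ i) (add_zero n)), Ext.zero_comp]
  rw [key α, key β]

end StmtAux

/-- if `Ext¹(M,M) = 0`, `0 → Y → M₀ → X → 0` is exact with
`M₀ ∈ add M`, there is an epi `M₁ ↠ Y` with `M₁ ∈ add M`,
`Ext¹(X,M) = 0` and `Ext²(X, ker(M₁ ↠ Y)) = 0`, then `Ext¹(X,Y) = 0`,
the sequence splits and `X` is a direct summand of `M₀`. -/
theorem stmt4 {A : Type u} [Category.{v} A] [Abelian A] [HasExt.{w} A]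
    (M Y M₀ X M₁ : A)
    (hMM : Subsingleton (Abelian.Ext M M 1))
    (i : Y ⟶ M₀) (p : M₀ ⟶ X) (hw : i ≫ p = 0)
    (hse : (ShortComplex.mk i p hw).ShortExact)
    (hM₀ : InAdd M M₀)
    (q : M₁ ⟶ Y) (hq : Epi q) (hM₁ : InAdd M M₁)
    (h1 : Subsingleton (Abelian.Ext X M 1))
    (h2 : Subsingleton (Abelian.Ext X (kernel q) 2)) :
    Subsingleton (Abelian.Ext X Y 1) ∧
    (∃ r : X ⟶ M₀, r ≫ p = 𝟙 X) ∧
    (∃ (j : X ⟶ M₀) (r' : M₀ ⟶ X), j ≫ r' = 𝟙 X) := by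
  open CategoryTheory.Abelian in
  -- the short exact sequence `0 → ker q → M₁ → Y → 0`
  have hse2 : (ShortComplex.mk (kernel.ι q) q (kernel.condition q)).ShortExact := by
    constructor
    exact ShortComplex.exact_of_f_is_kernel _ (kernelIsKernel q)
  -- `Ext¹(X, M₁) = 0`
  have hXM₁ : Subsingleton (Ext X M₁ 1) := StmtAux.subsingleton_of_inAdd M X M₁ 1 h1 hM₁
  -- `Ext¹(X, Y) = 0`
  have hXY : Subsingleton (Ext X Y 1) := by
    have key : ∀ α : Ext X Y 1, α = 0 := by
      intro α
      obtain ⟨x₂, hx₂⟩ := Ext.covariant_sequence_exact₃ X hse2 α rfl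
        (Subsingleton.elim _ _)
      rw [← hx₂, Subsingleton.elim x₂ 0, Ext.zero_comp]
    exact ⟨fun a b => by rw [key a, key b]⟩
  -- the extension class of the first sequence vanishes, hence it splits
  have hr : ∃ r : X ⟶ M₀, r ≫ p = 𝟙 X := by
    letI := HasDerivedCategory.standard A
    have hδ : hse.singleδ = 0 := by
      rw [← hse.extClass_hom, Subsingleton.elim hse.extClass 0, Ext.zero_hom]
    obtain ⟨g, hg⟩ := Pretriangulated.Triangle.coyoneda_exact₃ _
      (hse.singleTriangle_distinguished) (𝟙 _)
      (by rw [CategoryTheory.Category.id_comp]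
          exact hδ)
    -- `g : (singleFunctor A 0).obj X ⟶ (singleFunctor A 0).obj M₀`,
    -- `𝟙 _ = g ≫ (singleFunctor A 0).map p`
    let H := DerivedCategory.homologyFunctor A 0
    let e : DerivedCategory.singleFunctor A 0 ⋙ H ≅ 𝟭 A :=
      Functor.isoWhiskerRight ((SingleFunctors.evaluation _ _ (0 : ℤ)).mapIso
        (DerivedCategory.singleFunctorsPostcompQIso A)) H ≪≫
      Functor.associator _ _ _ ≪≫
      Functor.isoWhiskerLeft _ (DerivedCategory.homologyFunctorFactors A 0) ≪≫
      HomologicalComplex.homologyFunctorSingleIso A (ComplexShape.up ℤ) 0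
    obtain ⟨g, hg⟩ : ∃ g' : (DerivedCategory.singleFunctor A 0).obj X ⟶ (DerivedCategory.singleFunctor A 0).obj M₀, 𝟙 _ = g' ≫ (DerivedCategory.singleFunctor A 0).map p := ⟨g, hg⟩
    refine ⟨e.inv.app X ≫ H.map g ≫ e.hom.app M₀, ?_⟩
    have hnat : e.hom.app M₀ ≫ p =
        H.map ((DerivedCategory.singleFunctor A 0).map p) ≫ e.hom.app X :=
      (e.hom.naturality p).symm
    rw [Category.assoc, Category.assoc, hnat, ← Category.assoc (H.map g),
      ← H.map_comp]
    have : g ≫ (DerivedCategory.singleFunctor A 0).map p = 𝟙 _ := by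
      have := hg.symm
      exact this
    rw [this, H.map_id, Category.id_comp, Iso.inv_hom_id_app]
    rfl
  refine ⟨hXY, hr, ?_⟩
  obtain ⟨r, hrp⟩ := hr
  exact ⟨r, p, hrp⟩
end

section
/- Let T be a triangulated category and suppose we have a commutative diagram of morphisms of distinguished triangles: (s, r, t) from A →^a B →^b C → A[1] to X →^x Y →^y Z → X[1], followed by (f, g, h) from X → Y → Z → X[1] back to A → B → C → A[1]. If f∘s = 1_A, then B is a direct summand of C ⊕ Y and C is a direct summand of Z ⊕ B. Dually, if h∘t = 1_C, then B is a direct summand of A ⊕ Y and A is a direct summand of X ⊕ B. -/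
open CategoryTheory CategoryTheory.Limits CategoryTheory.Pretriangulated

universe v u

/-- `X` is a direct summand of `Y`. -/
def IsDirectSummand {T : Type u} [Category.{v} T] (X Y : T) : Prop :=
  ∃ (i : X ⟶ Y) (r : Y ⟶ X), i ≫ r = 𝟙 X

/-- given morphisms of distinguished triangles
`(s,r,t) : (A,B,C) → (X,Y,Z)` and `(f,g,h) : (X,Y,Z) → (A,B,C)`,
if `f ∘ s = 1_A` then `B` is a direct summand of `C ⊞ Y` and `C` is a
direct summand of `Z ⊞ B`; if `h ∘ t = 1_C` then `B` is a direct summand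
of `A ⊞ Y` and `A` is a direct summand of `X ⊞ B`. -/
theorem stmt13 {T : Type u} [Category.{v} T] [Preadditive T] [HasZeroObject T]
    [HasShift T ℤ] [∀ n : ℤ, (shiftFunctor T n).Additive] [Pretriangulated T]
    [HasBinaryBiproducts T]
    {A B C X Y Z : T}
    (a : A ⟶ B) (b : B ⟶ C) (c : C ⟶ A⟦(1 : ℤ)⟧)
    (x : X ⟶ Y) (y : Y ⟶ Z) (z : Z ⟶ X⟦(1 : ℤ)⟧)
    (hT₁ : Triangle.mk a b c ∈ distTriang T)
    (hT₂ : Triangle.mk x y z ∈ distTriang T)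
    (s : A ⟶ X) (r : B ⟶ Y) (t : C ⟶ Z)
    (hsr : a ≫ r = s ≫ x) (hrt : b ≫ t = r ≫ y)
    (hts : c ≫ s⟦(1 : ℤ)⟧' = t ≫ z)
    (f : X ⟶ A) (g : Y ⟶ B) (h : Z ⟶ C)
    (hfg : x ≫ g = f ≫ a) (hgh : y ≫ h = g ≫ b)
    (hhf : z ≫ f⟦(1 : ℤ)⟧' = h ≫ c) :
    (s ≫ f = 𝟙 A →
      IsDirectSummand B (C ⊞ Y) ∧ IsDirectSummand C (Z ⊞ B)) ∧
    (t ≫ h = 𝟙 C →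
      IsDirectSummand B (A ⊞ Y) ∧ IsDirectSummand A (X ⊞ B)) := by
  constructor
  · intro hsf
    constructor
    · -- B summand of C ⊞ Y
      have h1 : a ≫ (𝟙 B - r ≫ g) = 0 := by
        rw [Preadditive.comp_sub, Category.comp_id, reassoc_of% hsr, hfg, reassoc_of% hsf,
          sub_self]
      obtain ⟨p, hp⟩ := Pretriangulated.Triangle.yoneda_exact₂ _ hT₁ (𝟙 B - r ≫ g) h1
      change C ⟶ B at p
      replace hp : 𝟙 B - r ≫ g = b ≫ p := hp
      refine ⟨biprod.lift b r, biprod.desc p g, ?_⟩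
      simp only [biprod.lift_desc]
      rw [← hp]; abel
    · -- C summand of Z ⊞ B
      have h1 : (𝟙 C - t ≫ h) ≫ c = 0 := by
        rw [Preadditive.sub_comp, Category.id_comp, Category.assoc, ← hhf, ← reassoc_of% hts,
          ← Functor.map_comp, hsf, CategoryTheory.Functor.map_id, Category.comp_id, sub_self]
      obtain ⟨q, hq⟩ := Pretriangulated.Triangle.coyoneda_exact₃ _ hT₁ (𝟙 C - t ≫ h) h1
      change C ⟶ B at q
      replace hq : 𝟙 C - t ≫ h = q ≫ b := hq
      refine ⟨biprod.lift t q, biprod.desc h b, ?_⟩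
      simp only [biprod.lift_desc]
      rw [← hq]; abel
  · intro hth
    have key : c ≫ s⟦(1 : ℤ)⟧' ≫ f⟦(1 : ℤ)⟧' = c := by
      rw [reassoc_of% hts, hhf, reassoc_of% hth]
    constructor
    · -- B summand of A ⊞ Y
      have h1 : (𝟙 B - r ≫ g) ≫ b = 0 := by
        rw [Preadditive.sub_comp, Category.id_comp, Category.assoc, ← hgh, ← reassoc_of% hrt,
          hth, Category.comp_id, sub_self]
      obtain ⟨w, hw⟩ := Pretriangulated.Triangle.coyoneda_exact₂ _ hT₁ (𝟙 B - r ≫ g) h1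
      change B ⟶ A at w
      replace hw : 𝟙 B - r ≫ g = w ≫ a := hw
      refine ⟨biprod.lift w r, biprod.desc a g, ?_⟩
      simp only [biprod.lift_desc]
      rw [← hw]; abel
    · -- A summand of X ⊞ B
      have hrot := inv_rot_of_distTriang _ hT₁
      have h1 : (Triangle.mk a b c).invRotate.mor₁ ≫ (𝟙 A - s ≫ f) = 0 := by
        simp only [Triangle.invRotate_mor₁, Triangle.mk_mor₃]
        change (-(c⟦(-1:ℤ)⟧') ≫ (shiftFunctorCompIsoId T (1:ℤ) (-1) (by omega)).hom.app A) ≫ (𝟙 A - s ≫ f) = 0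
        rw [Preadditive.comp_sub]
        erw [Category.comp_id]
        have key2 : c ≫ (s ≫ f)⟦(1 : ℤ)⟧' = c := by rw [Functor.map_comp]; exact key
        have nat := (shiftFunctorCompIsoId T (1 : ℤ) (-1 : ℤ)
          (by omega)).hom.naturality (s ≫ f)
        dsimp at nat
        simp only [Preadditive.neg_comp, Category.assoc]
        rw [← nat, ← Functor.map_comp_assoc, key2, sub_self]
      obtain ⟨p, hp⟩ := Pretriangulated.Triangle.yoneda_exact₂ _ hrot (𝟙 A - s ≫ f) h1
      change B ⟶ A at p
      replace hp : 𝟙 A - s ≫ f = a ≫ p := hp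
      refine ⟨biprod.lift s a, biprod.desc f p, ?_⟩
      simp only [biprod.lift_desc]
      rw [← hp]; abel
end
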